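/- Existence of a partial field with arbitrary prescribed finite strong characteristic set: let S be a finite nonempty set of primes (each p ∈ S prime or p = 0), and let R = ∏_{p ∈ S} Z_p, where Z_p is the prime field of characteristic p (F_p for p prime, Q for p = 0). Then for a field F there exists a ring homomorphism R → F if and only if char F ∈ S. -/

import Mathlib

/-- Let `S` be a finite nonempty set of characteristics (each element `0` or a
prime) and `R = ∏_{p ∈ S} Z_p`, where `Z_p` is the prime field of
characteristic `p` (i.e. `Z_p ≅ ℚ` if `p = 0` and `Z_p ≅ ZMod p` if `p` is
prime). Then for any field `F`, there is a ring homomorphism `R → F` iff the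
characteristic of `F` belongs to `S`. -/
theorem stmt18 (S : Finset ℕ) (hS : S.Nonempty)
    (hSp : ∀ p ∈ S, p = 0 ∨ Nat.Prime p)
    (K : ℕ → Type) [∀ p, Field (K p)]
    (hK : ∀ p ∈ S, if p = 0 then Nonempty (K p ≃+* ℚ) else Nonempty (K p ≃+* ZMod p))
    (F : Type) [Field F] :
    Nonempty ((∀ p : S, K p) →+* F) ↔ ringChar F ∈ S := by
  classical
  constructor
  · rintro ⟨φ⟩
    -- idempotents e_p
    set e : (p : S) → ∀ q : S, K q := fun p => Function.update 0 p 1 with he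
    have hsum : (∑ p : S, e p) = 1 := by
      funext q
      simp only [Finset.sum_apply, Pi.one_apply, he]
      rw [Finset.sum_eq_single q]
      · simp [Function.update_self]
      · intro b _ hb
        simp [Function.update_of_ne (Ne.symm hb)]
      · simp
    -- some e_p maps to a nonzero element
    have : ∃ p : S, φ (e p) ≠ 0 := by
      by_contra h
      push_neg at h
      have : (1 : F) = 0 := by
        calc (1 : F) = φ 1 := (map_one φ).symm
        _ = φ (∑ p : S, e p) := by rw [hsum]
        _ = ∑ p : S, φ (e p) := map_sum φ _ _
        _ = 0 := by simp [h]
      exact one_ne_zero this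
    obtain ⟨p, hp⟩ := this
    -- φ (e p) is a nonzero idempotent, hence 1
    have hep : φ (e p) = 1 := by
      have hid : φ (e p) * φ (e p) = φ (e p) := by
        rw [← map_mul]
        congr 1
        funext q
        by_cases hq : q = p
        · subst hq; simp [he, Function.update_self]
        · simp [he, Function.update_of_ne hq]
      exact mul_right_cancel₀ hp (hid.trans (one_mul _).symm)
    -- the injection K p → ∏ K q, x ↦ update 0 p x, composed with φ
    have jadd : ∀ x y : K p, Function.update (0 : ∀ q : S, K q) p (x + y) =
        Function.update (0 : ∀ q : S, K q) p x + Function.update (0 : ∀ q : S, K q) p y := by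
      intro x y
      funext q
      by_cases hq : q = p
      · subst hq; simp [Function.update_self]
      · simp [Function.update_of_ne hq]
    have jmul : ∀ x y : K p, Function.update (0 : ∀ q : S, K q) p (x * y) =
        Function.update (0 : ∀ q : S, K q) p x * Function.update (0 : ∀ q : S, K q) p y := by
      intro x y
      funext q
      by_cases hq : q = p
      · subst hq; simp [Function.update_self]
      · simp [Function.update_of_ne hq]
    let ψ : K p →+* F :=
      { toFun := fun x => φ (Function.update 0 p x)
        map_one' := hep
        map_mul' := fun x y => by rw [jmul, map_mul]
        map_zero' := by simp
        map_add' := fun x y => by rw [jadd, map_add] }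
    -- use ψ to determine the characteristic
    have hcp := hK p p.2
    rcases eq_or_ne (p : ℕ) 0 with h0 | h0
    · rw [if_pos h0] at hcp
      obtain ⟨eq⟩ := hcp
      let f : ℚ →+* F := ψ.comp eq.symm.toRingHom
      haveI : CharP F 0 := charP_of_injective_ringHom f.injective 0
      have : ringChar F = 0 := ringChar.eq F 0
      rw [this, ← h0]
      exact p.2
    · rw [if_neg h0] at hcp
      obtain ⟨eq⟩ := hcp
      have hprime : Nat.Prime (p : ℕ) := (hSp p p.2).resolve_left h0
      haveI : Fact (Nat.Prime (p : ℕ)) := ⟨hprime⟩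
      let f : ZMod (p : ℕ) →+* F := ψ.comp eq.symm.toRingHom
      haveI : CharP F (p : ℕ) := charP_of_injective_ringHom f.injective (p : ℕ)
      have : ringChar F = (p : ℕ) := ringChar.eq F (p : ℕ)
      rw [this]
      exact p.2
  · intro hmem
    haveI : CharP F (ringChar F) := ringChar.charP F
    have hcp := hK _ hmem
    rcases hSp _ hmem with h0 | hprime
    · rw [if_pos h0] at hcp
      obtain ⟨eq⟩ := hcp
      haveI : CharP F 0 := h0 ▸ (ringChar.charP F)
      haveI : CharZero F := CharP.charP_to_charZero F
      exact ⟨(Rat.castHom F).comp (eq.toRingHom.comp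
        (Pi.evalRingHom (fun q : S => K q) ⟨ringChar F, hmem⟩))⟩
    · rw [if_neg hprime.ne_zero] at hcp
      obtain ⟨eq⟩ := hcp
      exact ⟨(ZMod.castHom dvd_rfl F).comp (eq.toRingHom.comp
        (Pi.evalRingHom (fun q : S => K q) ⟨ringChar F, hmem⟩))⟩
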